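/- For all integers 1 ≤ p, q ≤ N, the symmetric tridiagonal matrix J(p,q) commutes with the periodic prolate matrix S(p,q): J(p,q) S(p,q) − S(p,q) J(p,q) = 0. -/

import Mathlib

open Matrix Complex

/-- The periodic prolate matrix `S(p,q) ∈ ℝ^{q×q}` with entries
`sin(pπ(j-k)/N)/sin(π(j-k)/N)` off the diagonal and `p` on the diagonal. -/
noncomputable def prolateS (N p q : ℕ) : Matrix (Fin q) (Fin q) ℝ :=
  fun j k => if j = k then (p : ℝ)
    else Real.sin ((p : ℝ) * Real.pi * (((j : ℕ) : ℝ) - ((k : ℕ) : ℝ)) / N) /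
         Real.sin (Real.pi * (((j : ℕ) : ℝ) - ((k : ℕ) : ℝ)) / N)

/-- The symmetric tridiagonal matrix `J(p,q) ∈ ℝ^{q×q}` with diagonal entries
`cos(π(2k-q-1)/N)·cos(pπ/N)` for 1-based `k` (0-based: `cos(π(2k+1-q)/N)·cos(pπ/N)`),
off-diagonal entries `[J]_{k,k+1} = [J]_{k+1,k} = -sin(πk/N)·sin(π(q-k)/N)` for
1-based `1 ≤ k ≤ q-1`, and all other entries zero. -/
noncomputable def tridiagJ (N p q : ℕ) : Matrix (Fin q) (Fin q) ℝ :=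
  fun j k =>
    if j = k then
      Real.cos (Real.pi * (2 * ((j : ℕ) : ℝ) + 1 - (q : ℝ)) / N) *
        Real.cos ((p : ℝ) * Real.pi / N)
    else if (j : ℕ) + 1 = (k : ℕ) ∨ (k : ℕ) + 1 = (j : ℕ) then
      -(Real.sin (Real.pi * ((min (j : ℕ) (k : ℕ) : ℝ) + 1) / N) *
        Real.sin (Real.pi * ((q : ℝ) - ((min (j : ℕ) (k : ℕ) : ℝ) + 1)) / N))
    else 0

noncomputable def aaF (N p q : ℕ) (x : ℤ) : ℝ :=
  Real.cos (Real.pi * (2 * (x : ℝ) + 1 - (q : ℝ)) / N) * Real.cos ((p : ℝ) * Real.pi / N)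

noncomputable def bbF (N q : ℕ) (x : ℤ) : ℝ :=
  -(Real.sin (Real.pi * ((x : ℝ) + 1) / N) *
    Real.sin (Real.pi * ((q : ℝ) - ((x : ℝ) + 1)) / N))

noncomputable def ssF (N p : ℕ) (d : ℤ) : ℝ :=
  if d = 0 then (p : ℝ)
  else Real.sin ((p : ℝ) * Real.pi * (d : ℝ) / N) / Real.sin (Real.pi * (d : ℝ) / N)

lemma sinmul (a b : ℝ) :
    Real.sin a * Real.sin b = (Real.cos (a - b) - Real.cos (a + b)) / 2 := by
  rw [Real.cos_sub, Real.cos_add]; ring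

lemma ssF_spec (N p : ℕ) (d : ℤ) :
    Real.sin (Real.pi * (d : ℝ) / N) * ssF N p d
      = Real.sin ((p : ℝ) * Real.pi * (d : ℝ) / N) := by
  unfold ssF
  by_cases h : d = 0
  · simp [h]
  · rw [if_neg h]
    by_cases hs : Real.sin (Real.pi * (d : ℝ) / N) = 0
    · rw [hs, zero_mul]
      by_cases hN : (N : ℝ) = 0
      · simp [hN]
      · obtain ⟨n, hn⟩ := Real.sin_eq_zero_iff.mp hs
        have hd : (d : ℝ) = n * N := by
          have h2 : Real.pi * (d : ℝ) = Real.pi * ((n : ℝ) * N) := by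
            field_simp at hn; rw [← hn]
          have := mul_left_cancel₀ Real.pi_ne_zero h2
          linarith
        have harg : (p : ℝ) * Real.pi * ((n : ℝ) * N) / N = ((p * n : ℤ) : ℝ) * Real.pi := by
          push_cast; field_simp
        rw [hd, harg, Real.sin_int_mul_pi]
    · rw [mul_comm, div_mul_cancel₀ _ hs]

lemma prolateS_eq (N p q : ℕ) (j k : Fin q) :
    prolateS N p q j k = ssF N p ((j : ℤ) - (k : ℤ)) := by
  unfold prolateS ssF
  by_cases h : j = k
  · simp [h]
  · have h2 : ¬((j : ℤ) - (k : ℤ) = 0) := by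
      rw [sub_eq_zero]
      intro hh
      exact h (Fin.ext (by exact_mod_cast hh))
    rw [if_neg h, if_neg h2]
    push_cast
    ring_nf

lemma mulJS (N p q : ℕ) (j k : Fin q) :
    (tridiagJ N p q * prolateS N p q) j k
      = aaF N p q (j : ℤ) * ssF N p ((j : ℤ) - (k : ℤ))
        + bbF N q ((j : ℤ) - 1) * ssF N p ((j : ℤ) - (k : ℤ) - 1)
        + bbF N q (j : ℤ) * ssF N p ((j : ℤ) - (k : ℤ) + 1) := by
  rw [Matrix.mul_apply]
  have key : ∀ m : Fin q, tridiagJ N p q j m * prolateS N p q m k =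
      (if m = j then aaF N p q (j : ℤ) * ssF N p ((j : ℤ) - (k : ℤ)) else 0)
      + (if (m : ℕ) + 1 = (j : ℕ) then
          bbF N q ((j : ℤ) - 1) * ssF N p ((j : ℤ) - (k : ℤ) - 1) else 0)
      + (if (j : ℕ) + 1 = (m : ℕ) then
          bbF N q (j : ℤ) * ssF N p ((j : ℤ) - (k : ℤ) + 1) else 0) := by
    intro m
    rcases eq_or_ne m j with hm | hm
    · subst hm
      rw [if_pos rfl, if_neg (by omega), if_neg (by omega), add_zero, add_zero]
      unfold tridiagJ
      rw [if_pos rfl, prolateS_eq]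
      unfold aaF
      norm_num
    · rw [if_neg hm]
      unfold tridiagJ
      rw [if_neg (fun h => hm h.symm)]
      by_cases h1 : (m : ℕ) + 1 = (j : ℕ)
      · rw [if_pos (Or.inr h1), if_pos h1, if_neg (by omega)]
        rw [min_eq_right (show ((m:ℕ):ℝ) ≤ ((j:ℕ):ℝ) by exact_mod_cast (by omega : (m:ℕ) ≤ (j:ℕ))), prolateS_eq]
        have e1 : (j : ℤ) - 1 = (m : ℤ) := by omega
        have e2 : (j : ℤ) - (k : ℤ) - 1 = (m : ℤ) - (k : ℤ) := by omega
        rw [e1, e2]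
        unfold bbF
        push_cast
        ring
      · by_cases h2 : (j : ℕ) + 1 = (m : ℕ)
        · rw [if_pos (Or.inl h2), if_neg h1, if_pos h2]
          rw [min_eq_left (show ((j:ℕ):ℝ) ≤ ((m:ℕ):ℝ) by exact_mod_cast (by omega : (j:ℕ) ≤ (m:ℕ))), prolateS_eq]
          have e2 : (j : ℤ) - (k : ℤ) + 1 = (m : ℤ) - (k : ℤ) := by omega
          rw [e2]
          unfold bbF
          push_cast
          ring
        · rw [if_neg (by tauto), if_neg h1, if_neg h2]
          ring
  rw [Finset.sum_congr rfl (fun m _ => key m), Finset.sum_add_distrib,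
    Finset.sum_add_distrib]
  congr 1
  · congr 1
    · rw [Finset.sum_ite_eq' Finset.univ j]
      simp
    · by_cases hj : (j : ℕ) = 0
      · rw [Finset.sum_eq_zero (fun m _ => if_neg (by omega))]
        have hb : bbF N q ((j : ℤ) - 1) = 0 := by
          have : (j : ℤ) - 1 = (-1 : ℤ) := by omega
          rw [this]
          unfold bbF
          norm_num
        rw [hb, zero_mul]
      · have hlt : (j : ℕ) - 1 < q := by omega
        have hcond : ∀ m : Fin q, ((m : ℕ) + 1 = (j : ℕ)) ↔ m = ⟨(j : ℕ) - 1, hlt⟩ := by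
          intro m
          rw [Fin.ext_iff]
          simp only []
          omega
        simp only [hcond]
        rw [Finset.sum_ite_eq' Finset.univ]
        simp
  · by_cases hj : (j : ℕ) + 1 = q
    · rw [Finset.sum_eq_zero (fun m _ => if_neg (by omega))]
      have hb : bbF N q (j : ℤ) = 0 := by
        unfold bbF
        have : (q : ℝ) - (((j : ℤ) : ℝ) + 1) = 0 := by
          have : ((j : ℕ) : ℝ) + 1 = (q : ℝ) := by exact_mod_cast hj
          push_cast
          linarith
        rw [this]
        norm_num
      rw [hb, zero_mul]
    · have hlt : (j : ℕ) + 1 < q := by omega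
      have hcond : ∀ m : Fin q, ((j : ℕ) + 1 = (m : ℕ)) ↔ m = ⟨(j : ℕ) + 1, hlt⟩ := by
        intro m
        rw [Fin.ext_iff]
        simp only []
        omega
      simp only [hcond]
      rw [Finset.sum_ite_eq' Finset.univ]
      simp

lemma mulSJ (N p q : ℕ) (j k : Fin q) :
    (prolateS N p q * tridiagJ N p q) j k
      = aaF N p q (k : ℤ) * ssF N p ((j : ℤ) - (k : ℤ))
        + bbF N q ((k : ℤ) - 1) * ssF N p ((j : ℤ) - (k : ℤ) + 1)
        + bbF N q (k : ℤ) * ssF N p ((j : ℤ) - (k : ℤ) - 1) := by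
  rw [Matrix.mul_apply]
  have key : ∀ m : Fin q, prolateS N p q j m * tridiagJ N p q m k =
      (if m = k then aaF N p q (k : ℤ) * ssF N p ((j : ℤ) - (k : ℤ)) else 0)
      + (if (m : ℕ) + 1 = (k : ℕ) then
          bbF N q ((k : ℤ) - 1) * ssF N p ((j : ℤ) - (k : ℤ) + 1) else 0)
      + (if (k : ℕ) + 1 = (m : ℕ) then
          bbF N q (k : ℤ) * ssF N p ((j : ℤ) - (k : ℤ) - 1) else 0) := by
    intro m
    rcases eq_or_ne m k with hm | hm
    · subst hm
      rw [if_pos rfl, if_neg (by omega), if_neg (by omega), add_zero, add_zero]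
      unfold tridiagJ
      rw [if_pos rfl, prolateS_eq]
      unfold aaF
      norm_num
      ring
    · rw [if_neg hm]
      unfold tridiagJ
      rw [if_neg hm]
      by_cases h1 : (m : ℕ) + 1 = (k : ℕ)
      · rw [if_pos (Or.inl h1), if_pos h1, if_neg (by omega)]
        rw [min_eq_left (show ((m:ℕ):ℝ) ≤ ((k:ℕ):ℝ) by
          exact_mod_cast (by omega : (m:ℕ) ≤ (k:ℕ))), prolateS_eq]
        have e1 : (k : ℤ) - 1 = (m : ℤ) := by omega
        have e2 : (j : ℤ) - (k : ℤ) + 1 = (j : ℤ) - (m : ℤ) := by omega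
        rw [e1, e2]
        unfold bbF
        push_cast
        ring
      · by_cases h2 : (k : ℕ) + 1 = (m : ℕ)
        · rw [if_pos (Or.inr h2), if_neg h1, if_pos h2]
          rw [min_eq_right (show ((k:ℕ):ℝ) ≤ ((m:ℕ):ℝ) by
            exact_mod_cast (by omega : (k:ℕ) ≤ (m:ℕ))), prolateS_eq]
          have e2 : (j : ℤ) - (k : ℤ) - 1 = (j : ℤ) - (m : ℤ) := by omega
          rw [e2]
          unfold bbF
          push_cast
          ring
        · rw [if_neg (by tauto), if_neg h1, if_neg h2]
          ring
  rw [Finset.sum_congr rfl (fun m _ => key m), Finset.sum_add_distrib,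
    Finset.sum_add_distrib]
  congr 1
  · congr 1
    · rw [Finset.sum_ite_eq' Finset.univ k]
      simp
    · by_cases hk : (k : ℕ) = 0
      · rw [Finset.sum_eq_zero (fun m _ => if_neg (by omega))]
        have hb : bbF N q ((k : ℤ) - 1) = 0 := by
          have : (k : ℤ) - 1 = (-1 : ℤ) := by omega
          rw [this]
          unfold bbF
          norm_num
        rw [hb, zero_mul]
      · have hlt : (k : ℕ) - 1 < q := by omega
        have hcond : ∀ m : Fin q, ((m : ℕ) + 1 = (k : ℕ)) ↔ m = ⟨(k : ℕ) - 1, hlt⟩ := by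
          intro m
          rw [Fin.ext_iff]
          simp only []
          omega
        simp only [hcond]
        rw [Finset.sum_ite_eq' Finset.univ]
        simp
  · by_cases hk : (k : ℕ) + 1 = q
    · rw [Finset.sum_eq_zero (fun m _ => if_neg (by omega))]
      have hb : bbF N q (k : ℤ) = 0 := by
        unfold bbF
        have : (q : ℝ) - (((k : ℤ) : ℝ) + 1) = 0 := by
          have : ((k : ℕ) : ℝ) + 1 = (q : ℝ) := by exact_mod_cast hk
          push_cast
          linarith
        rw [this]
        norm_num
      rw [hb, zero_mul]
    · have hlt : (k : ℕ) + 1 < q := by omega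
      have hcond : ∀ m : Fin q, ((k : ℕ) + 1 = (m : ℕ)) ↔ m = ⟨(k : ℕ) + 1, hlt⟩ := by
        intro m
        rw [Fin.ext_iff]
        simp only []
        omega
      simp only [hcond]
      rw [Finset.sum_ite_eq' Finset.univ]
      simp

theorem tridiagJ_commutes_with_prolateS
    (N p q : ℕ) (hN : 0 < N) (hp1 : 1 ≤ p) (hpN : p ≤ N) (hq1 : 1 ≤ q) (hqN : q ≤ N) :
    tridiagJ N p q * prolateS N p q - prolateS N p q * tridiagJ N p q = 0 := by
  ext j k
  rw [Matrix.sub_apply, Matrix.zero_apply, sub_eq_zero, mulJS, mulSJ]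
  have s0 := ssF_spec N p ((j : ℤ) - (k : ℤ))
  have s1 := ssF_spec N p ((j : ℤ) - (k : ℤ) - 1)
  have s2 := ssF_spec N p ((j : ℤ) - (k : ℤ) + 1)
  push_cast at s0 s1 s2
  set xj := ((j : ℕ) : ℝ) with hxj
  set xk := ((k : ℕ) : ℝ) with hxk
  set c := Real.cos ((p : ℝ) * Real.pi / N) with hc
  set L := Real.sin (Real.pi * (xj + xk + 1 - (q : ℝ)) / N) with hL
  have h1 : aaF N p q (j : ℤ) - aaF N p q (k : ℤ)
      = -2 * c * L * Real.sin (Real.pi * (xj - xk) / N) := by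
    unfold aaF
    push_cast
    rw [hc, hL]
    rw [show Real.cos (Real.pi * (2 * xj + 1 - (q:ℝ)) / N) *
          Real.cos ((p:ℝ) * Real.pi / N) -
        Real.cos (Real.pi * (2 * xk + 1 - (q:ℝ)) / N) *
          Real.cos ((p:ℝ) * Real.pi / N)
      = (Real.cos (Real.pi * (2 * xj + 1 - (q:ℝ)) / N) -
         Real.cos (Real.pi * (2 * xk + 1 - (q:ℝ)) / N)) *
          Real.cos ((p:ℝ) * Real.pi / N) from by ring]
    rw [Real.cos_sub_cos]
    rw [show (Real.pi * (2 * xj + 1 - (q:ℝ)) / N + Real.pi * (2 * xk + 1 - (q:ℝ)) / N) / 2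
        = Real.pi * (xj + xk + 1 - (q:ℝ)) / N from by ring]
    rw [show (Real.pi * (2 * xj + 1 - (q:ℝ)) / N - Real.pi * (2 * xk + 1 - (q:ℝ)) / N) / 2
        = Real.pi * (xj - xk) / N from by ring]
    ring
  have h2 : bbF N q ((j : ℤ) - 1) - bbF N q (k : ℤ)
      = L * Real.sin (Real.pi * (xj - xk - 1) / N) := by
    unfold bbF
    push_cast
    rw [← hxj, ← hxk, hL, sinmul, sinmul, sinmul]
    ring_nf
  have h3 : bbF N q (j : ℤ) - bbF N q ((k : ℤ) - 1)
      = L * Real.sin (Real.pi * (xj - xk + 1) / N) := by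
    unfold bbF
    push_cast
    rw [← hxj, ← hxk, hL, sinmul, sinmul, sinmul]
    ring_nf
  have h4 : Real.sin ((p:ℝ) * Real.pi * (xj - xk - 1) / N)
        + Real.sin ((p:ℝ) * Real.pi * (xj - xk + 1) / N)
      = 2 * Real.sin ((p:ℝ) * Real.pi * (xj - xk) / N) * c := by
    rw [hc,
      show (p:ℝ) * Real.pi * (xj - xk - 1) / N
        = (p:ℝ) * Real.pi * (xj - xk) / N - (p:ℝ) * Real.pi / N from by ring,
      show (p:ℝ) * Real.pi * (xj - xk + 1) / N
        = (p:ℝ) * Real.pi * (xj - xk) / N + (p:ℝ) * Real.pi / N from by ring,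
      Real.sin_sub, Real.sin_add]
    ring
  linear_combination ssF N p ((j : ℤ) - (k : ℤ)) * h1
    + ssF N p ((j : ℤ) - (k : ℤ) - 1) * h2
    + ssF N p ((j : ℤ) - (k : ℤ) + 1) * h3
    + L * s1 + L * s2 - 2 * c * L * s0 + L * h4
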